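/- If a property P of trees holds for some tree T on n vertices, and P is preserved by both the Stretching and Expanding operations, then P holds for every tree on n vertices. -/

import Mathlib

open SimpleGraph Finset

/-- `G` embeds into `H` (a copy of `G` appears in `H`). -/
def graphEmbeds {V W : Type*} (G : SimpleGraph V) (H : SimpleGraph W) : Prop :=
  ∃ f : V → W, Function.Injective f ∧ ∀ u v, G.Adj u v → H.Adj (f u) (f v)

/-- `N` is large enough for the Ramsey property: every red/blue coloring of `K_N`
(the red graph `R`, blue graph `Rᶜ`) contains a red `G` or a blue `H`. -/
def isRamsey {V W : Type*} (G : SimpleGraph V) (H : SimpleGraph W) (N : ℕ) : Prop :=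
  ∀ R : SimpleGraph (Fin N), graphEmbeds G R ∨ graphEmbeds H Rᶜ

/-- The Ramsey number `R(G,H)`. -/
noncomputable def ramsey {V W : Type*} (G : SimpleGraph V) (H : SimpleGraph W) : ℕ :=
  sInf {N | isRamsey G H N}

/-- `t` disjoint copies of the complete graph `K_m`. -/
def kCliques (t m : ℕ) : SimpleGraph (Fin t × Fin m) where
  Adj x y := x.1 = y.1 ∧ x.2 ≠ y.2
  symm := ⟨fun x y h => ⟨h.1.symm, h.2.symm⟩⟩
  loopless := ⟨fun x h => h.2 rfl⟩

/-- The chromatic number as a natural number. -/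
noncomputable def chromNum {V : Type*} (G : SimpleGraph V) : ℕ := sInf {n | G.Colorable n}

/-- The chromatic surplus: the minimum size of a color class over all proper
colorings with `chromNum G` colors. -/
noncomputable def surplus {V : Type*} [Fintype V] (G : SimpleGraph V) : ℕ :=
  sInf {k | ∃ C : G.Coloring (Fin (chromNum G)), ∃ i : Fin (chromNum G),
    (Finset.univ.filter (fun v => C v = i)).card = k}

/-- `a` is a leaf of `G`: it has a unique neighbor. -/
def IsLeaf {V : Type*} (G : SimpleGraph V) (a : V) : Prop := ∃! w, G.Adj a w

/-- Stretching: delete a leaf `b` and attach a new vertex (reusing the label `b`)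
to the leaf `a`. -/
def isStretch {V : Type*} (T T' : SimpleGraph V) : Prop :=
  ∃ a b : V, a ≠ b ∧ IsLeaf T a ∧ IsLeaf T b ∧
    ∀ x y, T'.Adj x y ↔
      ((T.Adj x y ∧ x ≠ b ∧ y ≠ b) ∨ (x = b ∧ y = a) ∨ (x = a ∧ y = b))

/-- Expanding at a vertex `u` of degree `d` (`2 ≤ d ≤ n-2`) all of whose neighbors
are leaves except `z0`: delete a leaf `b` outside `N[u]` and attach a new vertex
(reusing the label `b`) to `u`. -/
def isExpand {V : Type*} [Fintype V] (T T' : SimpleGraph V) : Prop :=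
  ∃ u b z0 : V, T.Adj u z0 ∧ ¬ IsLeaf T z0 ∧
    (∀ z, T.Adj u z → z ≠ z0 → IsLeaf T z) ∧
    2 ≤ (T.neighborSet u).ncard ∧ (T.neighborSet u).ncard ≤ Fintype.card V - 2 ∧
    IsLeaf T b ∧ b ≠ u ∧ ¬ T.Adj u b ∧
    ∀ x y, T'.Adj x y ↔
      ((T.Adj x y ∧ x ≠ b ∧ y ≠ b) ∨ (x = b ∧ y = u) ∨ (x = u ∧ y = b))

/-- Disjoint union of `K_m` and `K_l`. -/
def kUnion (m l : ℕ) : SimpleGraph (Fin m ⊕ Fin l) where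
  Adj x y := x ≠ y ∧ ((x.isLeft ∧ y.isLeft) ∨ (x.isRight ∧ y.isRight))
  symm := ⟨fun x y h => ⟨h.1.symm, h.2.imp (fun p => ⟨p.2, p.1⟩) (fun p => ⟨p.2, p.1⟩)⟩⟩
  loopless := ⟨fun x h => h.1 rfl⟩

/-- Disjoint union of `k` graphs, each on `Fin n`. -/
def disjUnion {k n : ℕ} (Fs : Fin k → SimpleGraph (Fin n)) :
    SimpleGraph (Fin k × Fin n) where
  Adj x y := x.1 = y.1 ∧ (Fs x.1).Adj x.2 y.2
  symm := by
    constructor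
    rintro ⟨i, a⟩ ⟨j, b⟩ ⟨h1, h2⟩
    dsimp at h1 h2 ⊢
    subst h1
    exact ⟨rfl, h2.symm⟩
  loopless := by
    constructor
    rintro ⟨i, a⟩ ⟨h1, h2⟩
    exact (Fs i).loopless.irrefl a h2

/-- Disjoint union of graphs `Fs i` on `Fin (n i)`. -/
def sigmaUnion {r : ℕ} {n : Fin r → ℕ} (Fs : ∀ i, SimpleGraph (Fin (n i))) :
    SimpleGraph (Σ i, Fin (n i)) where
  Adj x y := ∃ (i : Fin r) (a b : Fin (n i)), x = ⟨i, a⟩ ∧ y = ⟨i, b⟩ ∧ (Fs i).Adj a b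
  symm := by
    constructor
    rintro x y ⟨i, a, b, hx, hy, h⟩
    exact ⟨i, b, a, hy, hx, h.symm⟩
  loopless := by
    constructor
    rintro x ⟨i, a, b, hx, hy, h⟩
    rw [hx] at hy
    obtain ⟨-, hab⟩ := (Sigma.mk.inj_iff).mp hy
    exact (Fs i).loopless.irrefl a (by cases eq_of_heq hab; exact h)

namespace StretchExpand

variable {V : Type*}

/-- Move leaf `b` to hang below `a`. -/
def mv (T : SimpleGraph V) (a b : V) : SimpleGraph V where
  Adj x y := (T.Adj x y ∧ x ≠ b ∧ y ≠ b) ∨ (x = b ∧ y = a ∧ a ≠ b) ∨ (x = a ∧ y = b ∧ a ≠ b)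
  symm := by
    constructor
    rintro x y (⟨h1, h2, h3⟩ | ⟨h1, h2, h3⟩ | ⟨h1, h2, h3⟩)
    · exact Or.inl ⟨h1.symm, h3, h2⟩
    · exact Or.inr (Or.inr ⟨h2, h1, h3⟩)
    · exact Or.inr (Or.inl ⟨h2, h1, h3⟩)
  loopless := by
    constructor
    rintro x (⟨h1, h2, h3⟩ | ⟨h1, h2, h3⟩ | ⟨h1, h2, h3⟩)
    · exact T.loopless.irrefl x h1
    · exact h3 (h2.symm.trans h1)
    · exact h3 (h1.symm.trans h2)

variable {T : SimpleGraph V} {a b : V}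

lemma mv_adj' (x y : V) :
    (mv T a b).Adj x y ↔
      (T.Adj x y ∧ x ≠ b ∧ y ≠ b) ∨ (x = b ∧ y = a ∧ a ≠ b) ∨ (x = a ∧ y = b ∧ a ≠ b) :=
  Iff.rfl

lemma mv_adj (hab : a ≠ b) (x y : V) :
    (mv T a b).Adj x y ↔ (T.Adj x y ∧ x ≠ b ∧ y ≠ b) ∨ (x = b ∧ y = a) ∨ (x = a ∧ y = b) := by
  rw [mv_adj']
  tauto

lemma mv_nbr_b (hab : a ≠ b) : (mv T a b).neighborSet b = {a} := by
  ext y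
  simp only [mem_neighborSet, Set.mem_singleton_iff, mv_adj']
  constructor
  · rintro (⟨_, h2, _⟩ | ⟨_, h2, _⟩ | ⟨h1, _, _⟩)
    · exact absurd rfl h2
    · exact h2
    · exact absurd h1.symm hab
  · rintro rfl; tauto

lemma mv_nbr_a (hab : a ≠ b) (hnadj : ¬ T.Adj a b) :
    (mv T a b).neighborSet a = insert b (T.neighborSet a) := by
  ext y
  simp only [mem_neighborSet, Set.mem_insert_iff, mv_adj']
  constructor
  · rintro (⟨h1, _, _⟩ | ⟨h1, _, _⟩ | ⟨_, h2, _⟩)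
    · exact Or.inr h1
    · exact absurd h1 hab
    · exact Or.inl h2
  · rintro (rfl | h)
    · tauto
    · have hyb : y ≠ b := fun hyb => hnadj (hyb ▸ h)
      exact Or.inl ⟨h, hab, hyb⟩

lemma mv_nbr_other {v : V} (hva : v ≠ a) (hvb : v ≠ b) :
    (mv T a b).neighborSet v = T.neighborSet v \ {b} := by
  ext y
  simp only [mem_neighborSet, Set.mem_diff, Set.mem_singleton_iff, mv_adj']
  constructor
  · rintro (⟨h1, _, h3⟩ | ⟨h1, _, _⟩ | ⟨h1, _, _⟩)
    · exact ⟨h1, h3⟩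
    · exact absurd h1 hvb
    · exact absurd h1 hva
  · rintro ⟨h1, h2⟩
    exact Or.inl ⟨h1, hvb, h2⟩

lemma leaf_iff {G : SimpleGraph V} {v : V} : IsLeaf G v ↔ ∃ w, G.neighborSet v = {w} := by
  constructor
  · rintro ⟨w, hw, huniq⟩
    refine ⟨w, ?_⟩
    ext z
    simp only [mem_neighborSet, Set.mem_singleton_iff]
    exact ⟨fun h => huniq z h, fun h => h ▸ hw⟩
  · rintro ⟨w, hw⟩
    refine ⟨w, ?_, fun z hz => ?_⟩
    · have : w ∈ G.neighborSet v := hw ▸ Set.mem_singleton w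
      exact this
    · have : z ∈ G.neighborSet v := hz
      rwa [hw] at this

lemma concat_isPath {G : SimpleGraph V} {u v w : V} {p : G.Walk u v} (h : G.Adj v w)
    (hp : p.IsPath) (hw : w ∉ p.support) : (p.concat h).IsPath := by
  have h1 : (Walk.cons h.symm p.reverse).IsPath := by
    rw [Walk.cons_isPath_iff]
    exact ⟨hp.reverse, by simpa using hw⟩
  have h2 := h1.reverse
  rw [Walk.reverse_cons, Walk.reverse_reverse, ← Walk.concat_eq_append] at h2
  exact h2

lemma exists_last_edge {G : SimpleGraph V} {x y : V} (q : G.Walk x y) (hq : ¬ q.Nil) :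
    ∃ z, G.Adj z y ∧ s(z, y) ∈ q.edges := by
  induction q with
  | nil => exact absurd Walk.nil_nil hq
  | @cons u v w h q' ih =>
    cases q' with
    | nil => exact ⟨u, h, by simp⟩
    | cons h2 q2 =>
      obtain ⟨z, hz1, hz2⟩ := ih (by simp [Walk.not_nil_cons])
      exact ⟨z, hz1, by simp [Walk.edges_cons]; right; simpa using hz2⟩

lemma no_cycle_at_leaf {G : SimpleGraph V} {b c : V} (hb : G.neighborSet b = {c})
    (wk : G.Walk b b) : ¬ wk.IsCycle := by
  intro hc
  cases wk with
  | nil => exact hc.ne_nil rfl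
  | @cons u v w h q =>
    have hv : v = c := by
      have h' : v ∈ G.neighborSet b := h
      rwa [hb] at h'
    subst hv
    rw [Walk.cons_isCycle_iff] at hc
    obtain ⟨hq, hne⟩ := hc
    have hnq : ¬ q.Nil := by
      rw [Walk.nil_iff_length_eq]
      intro h0
      exact G.loopless.irrefl b (Walk.eq_of_length_eq_zero h0 ▸ h)
    obtain ⟨z, hz1, hz2⟩ := exists_last_edge q hnq
    have hz : z = v := by
      have h' : z ∈ G.neighborSet b := hz1.symm
      rw [hb] at h'
      exact h'
    subst hz
    rw [Sym2.eq_swap] at hz2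
    exact hne hz2

end StretchExpand

-- appended to p1 context
namespace StretchExpand

variable {V : Type*} {T : SimpleGraph V} {a b : V}

/-- A path between two vertices distinct from a leaf `b` avoids `b`. -/
lemma nopass {c : V} (hb : T.neighborSet b = {c}) :
    ∀ {x y : V} (p : T.Walk x y), p.IsPath → x ≠ b → y ≠ b → b ∉ p.support := by
  intro x y p
  induction p with
  | nil => intro _ hx _ h; simp at h; exact hx h.symm
  | @cons u v w h q ih =>
    intro hp hx hy hmem
    rw [Walk.support_cons, List.mem_cons] at hmem
    rcases hmem with h1 | h1
    · exact hx h1.symm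
    · rw [Walk.cons_isPath_iff] at hp
      obtain ⟨hq, hu⟩ := hp
      by_cases hvb : v = b
      · subst hvb
        have hu' : u = c := by
          have h' := h.symm
          rw [← SimpleGraph.mem_neighborSet, hb] at h'
          exact h'
        have hnq : ¬ q.Nil := by
          rw [Walk.nil_iff_length_eq]
          intro h0
          exact hy (Walk.eq_of_length_eq_zero h0).symm
        rw [Walk.not_nil_iff] at hnq
        obtain ⟨v2, h2, q2, rfl⟩ := hnq
        have hv2 : v2 = c := by
          have h' := h2
          rw [← SimpleGraph.mem_neighborSet, hb] at h'
          exact h'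
        apply hu
        rw [Walk.support_cons]
        apply List.mem_cons_of_mem
        have huv2 : u = v2 := hu'.trans hv2.symm
        rw [huv2]
        exact q2.start_mem_support
      · exact ih hq hvb hy h1

lemma mv_reachable {c : V} (hb : T.neighborSet b = {c}) (hab : a ≠ b)
    {x y : V} (p : T.Walk x y) (hp : b ∉ p.support) : (mv T a b).Reachable x y := by
  refine ⟨p.transfer (mv T a b) ?_⟩
  intro e he
  induction e with
  | h u v =>
    have hadj : T.Adj u v := p.adj_of_mem_edges he
    have hu : u ∈ p.support := p.fst_mem_support_of_mem_edges he
    have hv : v ∈ p.support := p.snd_mem_support_of_mem_edges he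
    have hub : u ≠ b := fun h => hp (h ▸ hu)
    have hvb : v ≠ b := fun h => hp (h ▸ hv)
    show (mv T a b).Adj u v
    exact Or.inl ⟨hadj, hub, hvb⟩

lemma mv_isTree (ht : T.IsTree) {c : V} (hb : T.neighborSet b = {c}) (hab : a ≠ b) :
    (mv T a b).IsTree := by
  classical
  have hconn : (mv T a b).Connected := by
    have hne : Nonempty V := ht.isConnected.nonempty
    rw [connected_iff]
    refine ⟨?_, hne⟩
    have key : ∀ v : V, (mv T a b).Reachable v a := by
      intro v
      by_cases hv : v = b
      · subst hv
        exact (Adj.reachable (by exact Or.inr (Or.inl ⟨rfl, rfl, hab⟩)))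
      · obtain ⟨w⟩ := ht.isConnected v a
        have hp := w.toPath
        exact mv_reachable hb hab hp.1 (nopass hb hp.1 hp.2 hv hab)
    intro u v
    exact (key u).trans (key v).symm
  refine ⟨hconn, ?_⟩
  intro v w hw
  by_cases hmem : b ∈ w.support
  · exact no_cycle_at_leaf (mv_nbr_b hab) (w.rotate b hmem) (hw.rotate hmem)
  · have hq : ∀ e ∈ w.edges, e ∈ T.edgeSet := by
      intro e he
      induction e with
      | h x y =>
        have hadj : (mv T a b).Adj x y := w.adj_of_mem_edges he
        have hx : x ∈ w.support := w.fst_mem_support_of_mem_edges he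
        have hy : y ∈ w.support := w.snd_mem_support_of_mem_edges he
        have hxb : x ≠ b := fun h => hmem (h ▸ hx)
        have hyb : y ≠ b := fun h => hmem (h ▸ hy)
        rcases hadj with ⟨h1, _, _⟩ | ⟨h1, _, _⟩ | ⟨_, h1, _⟩
        · exact h1
        · exact absurd h1 hxb
        · exact absurd h1 hyb
    exact ht.IsAcyclic (w.transfer T hq) (hw.transfer hq)

end StretchExpand

namespace StretchExpand

variable {V : Type*} {T : SimpleGraph V}

noncomputable def tpath (ht : T.IsTree) (v w : V) : T.Walk v w :=
  (ht.existsUnique_path v w).exists.choose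

lemma tpath_isPath (ht : T.IsTree) (v w : V) : (tpath ht v w).IsPath :=
  (ht.existsUnique_path v w).exists.choose_spec

lemma tpath_eq (ht : T.IsTree) {v w : V} {p : T.Walk v w} (hp : p.IsPath) :
    p = tpath ht v w :=
  ((ht.existsUnique_path v w).unique hp (tpath_isPath ht v w))

/-- distance from `r` to `v` in the tree: length of the unique path. -/
noncomputable def td (ht : T.IsTree) (r v : V) : ℕ := (tpath ht r v).length

lemma td_self (ht : T.IsTree) (r : V) : td ht r r = 0 := by
  have : (Walk.nil : T.Walk r r) = tpath ht r r := tpath_eq ht Walk.IsPath.nil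
  rw [td, ← this]
  rfl

lemma eq_of_td_eq_zero (ht : T.IsTree) {r v : V} (h : td ht r v = 0) : r = v :=
  Walk.eq_of_length_eq_zero h

lemma adj_of_td_eq_one (ht : T.IsTree) {r v : V} (h : td ht r v = 1) : T.Adj r v := by
  have hl : (tpath ht r v).length = 1 := h
  have h1 := (tpath ht r v).adj_getVert_succ (i := 0) (by rw [hl]; norm_num)
  rw [Walk.getVert_zero] at h1
  have h2 : (tpath ht r v).getVert 1 = v := (tpath ht r v).getVert_of_length_le (by rw [hl])
  rwa [h2] at h1

lemma td_mem_le [DecidableEq V] (ht : T.IsTree) {r v x : V}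
    (hx : x ∈ (tpath ht r v).support) : td ht r x ≤ td ht r v := by
  have h1 : ((tpath ht r v).takeUntil x hx).IsPath := (tpath_isPath ht r v).takeUntil hx
  have h2 := tpath_eq ht h1
  rw [td, td, ← h2]
  exact Walk.length_takeUntil_le _ hx

lemma not_mem_tpath_of_td_lt [DecidableEq V] (ht : T.IsTree) {r v x : V}
    (h : td ht r v < td ht r x) : x ∉ (tpath ht r v).support :=
  fun hx => absurd (td_mem_le ht hx) (not_le.mpr h)

lemma td_adj (ht : T.IsTree) {r y v : V} (h : T.Adj y v) :
    td ht r v = td ht r y + 1 ∨ td ht r y = td ht r v + 1 := by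
  classical
  by_cases hmem : v ∈ (tpath ht r y).support
  · right
    have hdrop : ((tpath ht r y).dropUntil v hmem).IsPath :=
      (tpath_isPath ht r y).dropUntil hmem
    have hsingle : (Walk.cons h.symm Walk.nil : T.Walk v y).IsPath := by
      rw [Walk.cons_isPath_iff]
      exact ⟨Walk.IsPath.nil, by simp [h.ne']⟩
    have huniq := (ht.existsUnique_path v y).unique hdrop hsingle
    have hlen : ((tpath ht r y).dropUntil v hmem).length = 1 := by rw [huniq]; rfl
    have hsplit := Walk.take_spec (tpath ht r y) hmem
    have htake : ((tpath ht r y).takeUntil v hmem).IsPath := (tpath_isPath ht r y).takeUntil hmem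
    have h2 := tpath_eq ht htake
    have : ((tpath ht r y).takeUntil v hmem).length
        + ((tpath ht r y).dropUntil v hmem).length = (tpath ht r y).length := by
      rw [← Walk.length_append, hsplit]
    rw [td, td, ← h2, ← this, hlen]
  · left
    have hcat : ((tpath ht r y).concat h).IsPath :=
      concat_isPath h (tpath_isPath ht r y) hmem
    have h2 := tpath_eq ht hcat
    rw [td, td, ← h2, Walk.length_concat]

lemma penult (ht : T.IsTree) {r v : V} (hv : v ≠ r) :
    ∃ y, T.Adj y v ∧ td ht r y + 1 = td ht r v ∧
      (∀ z, T.Adj z v → td ht r z + 1 = td ht r v → z = y) := by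
  classical
  set p := tpath ht r v with hp
  have hnp : ¬ p.Nil := by
    rw [Walk.nil_iff_length_eq]
    intro h0
    exact hv (Walk.eq_of_length_eq_zero h0).symm
  have hnpr : ¬ p.reverse.Nil := by
    rw [Walk.nil_iff_length_eq, Walk.length_reverse]
    rw [Walk.nil_iff_length_eq] at hnp
    exact hnp
  rw [Walk.not_nil_iff] at hnpr
  obtain ⟨y, hadj, q, hq⟩ := hnpr
  have hpeq : p = q.reverse.concat hadj.symm := by
    have := congrArg Walk.reverse hq
    rw [Walk.reverse_reverse, Walk.reverse_cons, ← Walk.concat_eq_append] at this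
    exact this
  have hqpath : q.reverse.IsPath := by
    have hrev : p.reverse.IsPath := (tpath_isPath ht r v).reverse
    rw [hq, Walk.cons_isPath_iff] at hrev
    exact hrev.1.reverse
  have hqeq := tpath_eq ht hqpath
  have hlen : td ht r y + 1 = td ht r v := by
    rw [td, td, ← hqeq]
    rw [hp] at hpeq
    rw [hpeq, Walk.length_concat, Walk.length_reverse]
  refine ⟨y, hadj.symm, hlen, ?_⟩
  intro z hz hzlen
  -- unique path to z does not contain v
  have hlt : td ht r z < td ht r v := by omega
  have hnmem : v ∉ (tpath ht r z).support := not_mem_tpath_of_td_lt ht hlt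
  have hcat : ((tpath ht r z).concat hz).IsPath :=
    concat_isPath hz (tpath_isPath ht r z) hnmem
  have hcev := tpath_eq ht hcat
  -- p has two concat decompositions; compare getVert at length - 1
  have hv1 : p.getVert (p.length - 1) = z := by
    rw [hp, ← hcev]
    rw [Walk.concat_eq_append, Walk.getVert_append, Walk.length_append]
    simp only [Walk.length_cons, Walk.length_nil]
    have hL : (tpath ht r z).length + (0 + 1) - 1 = (tpath ht r z).length := by omega
    simp only [hL, lt_self_iff_false, ite_false, Nat.sub_self]
    rfl
  have hv2 : p.getVert (p.length - 1) = y := by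
    rw [hpeq] at hv1 ⊢
    rw [Walk.concat_eq_append, Walk.getVert_append, Walk.length_append]
    simp only [Walk.length_cons, Walk.length_nil, Walk.length_reverse]
    have hL : q.length + (0 + 1) - 1 = q.length := by omega
    simp only [hL, lt_self_iff_false, ite_false, Nat.sub_self]
    rfl
  rw [hv1] at hv2
  exact hv2

/-- any vertex of maximal `td` from `r` (other than `r`) is a leaf. -/
lemma far_leaf (ht : T.IsTree) {r x : V} (hmax : ∀ v, td ht r v ≤ td ht r x) (hx : x ≠ r) :
    ∃ y, T.neighborSet x = {y} ∧ td ht r y + 1 = td ht r x := by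
  obtain ⟨y, hy1, hy2, hy3⟩ := penult ht hx
  refine ⟨y, ?_, hy2⟩
  ext z
  simp only [mem_neighborSet, Set.mem_singleton_iff]
  constructor
  · intro hz
    rcases td_adj ht (r := r) hz.symm with h1 | h1
    · exact hy3 z hz.symm (by omega)
    · exact absurd h1 (by have := hmax z; omega)
  · rintro rfl
    exact hy1.symm

end StretchExpand

namespace StretchExpand

variable {n : ℕ}

def NChain (T : SimpleGraph (Fin n)) (m : ℕ) (f : ℕ → Fin n) : Prop :=
  Set.InjOn f (Set.Iic m) ∧
  (∀ i < m, T.Adj (f i) (f (i+1))) ∧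
  (0 < m → T.neighborSet (f 0) = {f 1}) ∧
  (∀ i, 0 < i → i < m → T.neighborSet (f i) = {f (i-1), f (i+1)})

noncomputable def tau (T : SimpleGraph (Fin n)) : ℕ := sSup {m | ∃ f, NChain T m f}

lemma nchain_card {T : SimpleGraph (Fin n)} {m : ℕ} {f : ℕ → Fin n} (h : NChain T m f) :
    m + 1 ≤ n := by
  classical
  have hinj : Set.InjOn f ↑(Finset.Iic m) := by rw [Finset.coe_Iic]; exact h.1
  have h1 : (Finset.image f (Finset.Iic m)).card = m + 1 := by
    rw [Finset.card_image_of_injOn hinj, Nat.card_Iic]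
  have h2 := Finset.card_le_univ (Finset.image f (Finset.Iic m))
  simpa [h1] using h2

lemma nchain_zero {T : SimpleGraph (Fin n)} (v : Fin n) : NChain T 0 (fun _ => v) := by
  refine ⟨?_, by omega, by omega, by omega⟩
  intro a ha b hb _
  simp only [Set.mem_Iic, Nat.le_zero] at ha hb
  omega

lemma tau_set_nonempty {T : SimpleGraph (Fin n)} (hn : 0 < n) :
    {m | ∃ f, NChain T m f}.Nonempty :=
  ⟨0, ⟨fun _ => (⟨0, hn⟩ : Fin n), nchain_zero _⟩⟩

lemma tau_set_bdd {T : SimpleGraph (Fin n)} : BddAbove {m | ∃ f, NChain T m f} :=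
  ⟨n, fun m ⟨_, hf⟩ => by have := nchain_card hf; omega⟩

lemma tau_spec {T : SimpleGraph (Fin n)} (hn : 0 < n) : ∃ f, NChain T (tau T) f :=
  Nat.sSup_mem (tau_set_nonempty hn) tau_set_bdd

lemma le_tau {T : SimpleGraph (Fin n)} {m : ℕ} {f : ℕ → Fin n} (h : NChain T m f) :
    m ≤ tau T :=
  le_csSup tau_set_bdd ⟨f, h⟩

lemma tau_le {T : SimpleGraph (Fin n)} (hn : 0 < n) : tau T ≤ n - 1 :=
  csSup_le (tau_set_nonempty hn) (fun m ⟨_, hf⟩ => by have := nchain_card hf; omega)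

lemma leaf_chain1 {T : SimpleGraph (Fin n)} {l w : Fin n} (hl : T.neighborSet l = {w}) :
    NChain T 1 (fun i => if i = 0 then l else w) := by
  have hadj : T.Adj l w := by
    have : w ∈ T.neighborSet l := by rw [hl]; rfl
    exact this
  have hlw : l ≠ w := hadj.ne
  refine ⟨?_, ?_, ?_, by omega⟩
  · intro i hi j hj hij
    simp only [Set.mem_Iic] at hi hj
    interval_cases i <;> interval_cases j <;> simp_all
  · intro i hi
    interval_cases i
    simpa using hadj
  · intro _
    simpa using hl

lemma nchain_closure {T : SimpleGraph (Fin n)} {m : ℕ} {f : ℕ → Fin n}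
    (h : NChain T m f) (hm : 1 ≤ m) (hend : T.neighborSet (f m) = {f (m-1)})
    (hconn : T.Connected) : n ≤ m + 1 := by
  classical
  set S : Set (Fin n) := f '' Set.Iic m with hS
  have hclosed : ∀ x ∈ S, ∀ y, T.Adj x y → y ∈ S := by
    rintro x ⟨i, hi, rfl⟩ y hxy
    simp only [Set.mem_Iic] at hi
    rcases Nat.eq_zero_or_pos i with rfl | hipos
    · have h1 := h.2.2.1 hm
      have : y ∈ T.neighborSet (f 0) := hxy
      rw [h1] at this
      exact ⟨1, by simp only [Set.mem_Iic]; omega, this.symm⟩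
    · rcases eq_or_lt_of_le hi with rfl | hilt
      · have : y ∈ T.neighborSet (f i) := hxy
        rw [hend] at this
        exact ⟨i - 1, by simp only [Set.mem_Iic]; omega, this.symm⟩
      · have h1 := h.2.2.2 i hipos hilt
        have : y ∈ T.neighborSet (f i) := hxy
        rw [h1] at this
        rcases this with h2 | h2
        · exact ⟨i - 1, by simp only [Set.mem_Iic]; omega, h2.symm⟩
        · exact ⟨i + 1, by simp only [Set.mem_Iic]; omega, h2.symm⟩
  have hwalk : ∀ (x y : Fin n) (w : T.Walk x y), x ∈ S → y ∈ S := by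
    intro x y w
    induction w with
    | nil => exact id
    | cons hadj p ih => intro hx; exact ih (hclosed _ hx _ hadj)
  have huniv : S = Set.univ := by
    apply Set.eq_univ_of_forall
    intro v
    obtain ⟨w⟩ := hconn (f 0) v
    exact hwalk _ _ w ⟨0, by simp only [Set.mem_Iic]; omega, rfl⟩
  have h1 : S.ncard = n := by rw [huniv, Set.ncard_univ, Nat.card_eq_fintype_card, Fintype.card_fin]
  have h2 : S.ncard ≤ m + 1 := by
    rw [hS, Set.ncard_image_of_injOn h.1]
    have : (Set.Iic m) = ↑(Finset.Iic m) := by rw [Finset.coe_Iic]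
    rw [this, Set.ncard_coe_finset, Nat.card_Iic]
  omega

lemma nchain_extend {T : SimpleGraph (Fin n)} {m : ℕ} {f : ℕ → Fin n} {b c : Fin n}
    (hc : NChain T m f) (hm : 1 ≤ m) (hb : T.neighborSet b = {c})
    (hbim : ∀ i ≤ m, b ≠ f i) :
    NChain (mv T (f 0) b) (m + 1) (fun i => if i = 0 then b else f (i - 1)) := by
  have hab : f 0 ≠ b := (hbim 0 (by omega)).symm
  have hfa : T.neighborSet (f 0) = {f 1} := hc.2.2.1 hm
  have hnadj : ¬ T.Adj (f 0) b := by
    intro hadj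
    have : b ∈ T.neighborSet (f 0) := hadj
    rw [hfa] at this
    exact hbim 1 hm this
  refine ⟨?_, ?_, ?_, ?_⟩
  · intro i hi j hj hij
    simp only [Set.mem_Iic] at hi hj
    rcases eq_or_ne i 0 with rfl | hi0 <;> rcases eq_or_ne j 0 with rfl | hj0
    · rfl
    · simp only [reduceIte, if_neg hj0] at hij
      exact absurd hij (hbim (j-1) (by omega))
    · simp only [reduceIte, if_neg hi0] at hij
      exact absurd hij.symm (hbim (i-1) (by omega))
    · simp only [if_neg hi0, if_neg hj0] at hij
      have := hc.1 (show (i-1:ℕ) ∈ Set.Iic m by simp only [Set.mem_Iic]; omega)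
        (show (j-1:ℕ) ∈ Set.Iic m by simp only [Set.mem_Iic]; omega) hij
      omega
  · intro i hi
    by_cases hi0 : i = 0
    · subst hi0
      simp only [reduceIte, Nat.zero_add, if_neg (Nat.one_ne_zero), Nat.sub_self]
      exact Or.inr (Or.inl ⟨rfl, rfl, hab⟩)
    · simp only [if_neg hi0, if_neg (show i + 1 ≠ 0 by omega)]
      have hlt : i - 1 < m := by omega
      have hadj := hc.2.1 (i-1) hlt
      refine Or.inl ⟨by rw [show i + 1 - 1 = i - 1 + 1 by omega]; exact hadj, ?_, ?_⟩
      · exact (hbim (i-1) (by omega)).symm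
      · exact (hbim (i + 1 - 1) (by omega)).symm
  · intro _
    simp only [reduceIte, Nat.zero_add, if_neg (Nat.one_ne_zero), Nat.sub_self]
    rw [mv_nbr_b hab]
  · intro i hipos hilt
    simp only [if_neg (show i ≠ 0 by omega), if_neg (show i + 1 ≠ 0 by omega)]
    by_cases hi1 : i = 1
    · subst hi1
      simp only [Nat.sub_self, reduceIte]
      rw [mv_nbr_a hab hnadj, hfa]
    · have h2 : 1 ≤ i - 1 := by omega
      have h3 : i - 1 < m := by omega
      have hne_a : f (i-1) ≠ f 0 := by
        intro heq
        have := hc.1 (show (i-1:ℕ) ∈ Set.Iic m by simp only [Set.mem_Iic]; omega)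
          (show (0:ℕ) ∈ Set.Iic m by simp only [Set.mem_Iic]; omega) heq
        omega
      have hne_b : f (i-1) ≠ b := (hbim (i-1) (by omega)).symm
      have e1 : i - 1 + 1 = i := by omega
      have e2 : i + 1 - 1 = i := by omega
      rw [mv_nbr_other hne_a hne_b, hc.2.2.2 (i-1) h2 h3, e1, e2,
        Set.diff_singleton_eq_self (by
          simp only [Set.mem_insert_iff, Set.mem_singleton_iff]
          push_neg
          exact ⟨(hbim (i-1-1) (by omega)), (hbim i (by omega))⟩),
        if_neg (show i - 1 ≠ 0 by omega)]

end StretchExpand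

namespace StretchExpand

variable {n : ℕ}

lemma nchain_full_surj {T : SimpleGraph (Fin n)} {f : ℕ → Fin n}
    (h : NChain T (n-1) f) (hn : 0 < n) : ∀ x : Fin n, ∃ i ≤ n - 1, x = f i := by
  classical
  have hinj : Set.InjOn f ↑(Finset.Iic (n-1)) := by rw [Finset.coe_Iic]; exact h.1
  have h1 : (Finset.image f (Finset.Iic (n-1))).card = n := by
    rw [Finset.card_image_of_injOn hinj, Nat.card_Iic]
    omega
  have h2 : Finset.image f (Finset.Iic (n-1)) = Finset.univ :=
    Finset.eq_univ_of_card _ (by rw [h1]; simp)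
  intro x
  have : x ∈ Finset.image f (Finset.Iic (n-1)) := h2 ▸ Finset.mem_univ x
  obtain ⟨i, hi, hfi⟩ := Finset.mem_image.mp this
  exact ⟨i, Finset.mem_Iic.mp hi, hfi.symm⟩

lemma nchain_full_adj_aux {T : SimpleGraph (Fin n)} {f : ℕ → Fin n}
    (h : NChain T (n-1) f) {i j : ℕ} (hi : i ≤ n-1) (hj : j ≤ n-1) (hij : i < j)
    (hadj : T.Adj (f i) (f j)) : j = i + 1 := by
  rcases Nat.eq_zero_or_pos i with rfl | hipos
  · have h0 : 0 < n - 1 := by omega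
    have h1 := h.2.2.1 h0
    have : f j ∈ T.neighborSet (f 0) := hadj
    rw [h1] at this
    have := h.1 (show j ∈ Set.Iic (n-1) by simp only [Set.mem_Iic]; omega)
      (show 1 ∈ Set.Iic (n-1) by simp only [Set.mem_Iic]; omega) this
    omega
  · have hilt : i < n - 1 := by omega
    have h1 := h.2.2.2 i hipos hilt
    have : f j ∈ T.neighborSet (f i) := hadj
    rw [h1] at this
    rcases this with h2 | h2
    · have := h.1 (show j ∈ Set.Iic (n-1) by simp only [Set.mem_Iic]; omega)
        (show i - 1 ∈ Set.Iic (n-1) by simp only [Set.mem_Iic]; omega) h2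
      omega
    · have := h.1 (show j ∈ Set.Iic (n-1) by simp only [Set.mem_Iic]; omega)
        (show i + 1 ∈ Set.Iic (n-1) by simp only [Set.mem_Iic]; omega) h2
      omega

lemma nchain_full_adj {T : SimpleGraph (Fin n)} {f : ℕ → Fin n}
    (h : NChain T (n-1) f) (hn : 0 < n) (x y : Fin n) :
    T.Adj x y ↔ ∃ i, i + 1 ≤ n - 1 ∧
      ((x = f i ∧ y = f (i+1)) ∨ (y = f i ∧ x = f (i+1))) := by
  constructor
  · intro hadj
    obtain ⟨i, hi, rfl⟩ := nchain_full_surj h hn x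
    obtain ⟨j, hj, rfl⟩ := nchain_full_surj h hn y
    have hij : i ≠ j := by
      intro heq
      exact T.loopless.irrefl _ (heq ▸ hadj)
    rcases Nat.lt_or_ge i j with hlt | hge
    · have := nchain_full_adj_aux h hi hj hlt hadj
      exact ⟨i, by omega, Or.inl ⟨rfl, by rw [this]⟩⟩
    · have hlt : j < i := by omega
      have := nchain_full_adj_aux h hj hi hlt hadj.symm
      exact ⟨j, by omega, Or.inr ⟨rfl, by rw [this]⟩⟩
  · rintro ⟨i, hi, (⟨rfl, rfl⟩ | ⟨rfl, rfl⟩)⟩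
    · exact h.2.1 i (by omega)
    · exact (h.2.1 i (by omega)).symm

noncomputable def fullEquiv {T : SimpleGraph (Fin n)} {f : ℕ → Fin n}
    (h : NChain T (n-1) f) (hn : 0 < n) : Fin n ≃ Fin n :=
  Equiv.ofBijective (fun k => f k.val)
    ((Fintype.bijective_iff_injective_and_card _).mpr ⟨by
      intro k l hkl
      have := h.1 (show (k:ℕ) ∈ Set.Iic (n-1) by simp only [Set.mem_Iic]; omega)
        (show (l:ℕ) ∈ Set.Iic (n-1) by simp only [Set.mem_Iic]; omega) hkl
      exact Fin.ext this, rfl⟩)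

lemma fullEquiv_apply {T : SimpleGraph (Fin n)} {f : ℕ → Fin n}
    (h : NChain T (n-1) f) (hn : 0 < n) {i : ℕ} (hi : i ≤ n - 1) :
    fullEquiv h hn ⟨i, by omega⟩ = f i := rfl

lemma fullEquiv_symm_apply {T : SimpleGraph (Fin n)} {f : ℕ → Fin n}
    (h : NChain T (n-1) f) (hn : 0 < n) {i : ℕ} (hi : i ≤ n - 1) :
    (fullEquiv h hn).symm (f i) = ⟨i, by omega⟩ := by
  rw [Equiv.symm_apply_eq]
  rfl

lemma iso_of_full {T1 T2 : SimpleGraph (Fin n)} {f1 f2 : ℕ → Fin n}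
    (h1 : NChain T1 (n-1) f1) (h2 : NChain T2 (n-1) f2) (hn : 0 < n) :
    Nonempty (T1 ≃g T2) := by
  set φ : Fin n ≃ Fin n := (fullEquiv h1 hn).symm.trans (fullEquiv h2 hn) with hφ
  have key : ∀ i : ℕ, i ≤ n - 1 → φ (f1 i) = f2 i := by
    intro i hi
    rw [hφ]
    simp only [Equiv.trans_apply]
    rw [fullEquiv_symm_apply h1 hn hi]
    exact fullEquiv_apply h2 hn hi
  refine ⟨⟨φ, ?_⟩⟩
  intro x y
  show T2.Adj (φ x) (φ y) ↔ T1.Adj x y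
  rw [nchain_full_adj h1 hn x y, nchain_full_adj h2 hn (φ x) (φ y)]
  constructor
  · rintro ⟨i, hi, (⟨hx, hy⟩ | ⟨hy, hx⟩)⟩
    · have hx' : x = f1 i := by
        apply φ.injective; rw [hx, key i (by omega)]
      have hy' : y = f1 (i+1) := by
        apply φ.injective; rw [hy, key (i+1) hi]
      exact ⟨i, hi, Or.inl ⟨hx', hy'⟩⟩
    · have hy' : y = f1 i := by
        apply φ.injective; rw [hy, key i (by omega)]
      have hx' : x = f1 (i+1) := by
        apply φ.injective; rw [hx, key (i+1) hi]
      exact ⟨i, hi, Or.inr ⟨hy', hx'⟩⟩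
  · rintro ⟨i, hi, (⟨rfl, rfl⟩ | ⟨rfl, rfl⟩)⟩
    · exact ⟨i, hi, Or.inl ⟨key i (by omega), key (i+1) hi⟩⟩
    · exact ⟨i, hi, Or.inr ⟨key i (by omega), key (i+1) hi⟩⟩

end StretchExpand

namespace StretchExpand

variable {n : ℕ} {T : SimpleGraph (Fin n)}

lemma exists_max_td (ht : T.IsTree) (hn : 0 < n) (r : Fin n) :
    ∃ x, ∀ v, td ht r v ≤ td ht r x := by
  obtain ⟨x, _, hx⟩ := Finset.exists_max_image Finset.univ (td ht r)
    ⟨r, Finset.mem_univ r⟩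
  exact ⟨x, fun v => hx v (Finset.mem_univ v)⟩

lemma td_max_pos (ht : T.IsTree) (hn : 2 ≤ n) (r : Fin n) {x : Fin n}
    (hmax : ∀ v, td ht r v ≤ td ht r x) : 1 ≤ td ht r x ∧ x ≠ r := by
  obtain ⟨v, hv⟩ := Fintype.exists_ne_of_one_lt_card (by simp; omega) r
  have h1 : td ht r v ≠ 0 := fun h0 => hv (eq_of_td_eq_zero ht h0).symm
  have h2 : 1 ≤ td ht r x := le_trans (by omega) (hmax v)
  refine ⟨h2, fun heq => ?_⟩
  rw [heq, td_self] at h2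
  omega

lemma tau_pos (ht : T.IsTree) (hn : 2 ≤ n) : 1 ≤ tau T := by
  obtain ⟨x, hmax⟩ := exists_max_td ht (by omega) ⟨0, by omega⟩
  obtain ⟨h1, h2⟩ := td_max_pos ht hn _ hmax
  obtain ⟨y, hy, _⟩ := far_leaf ht hmax h2
  exact le_tau (leaf_chain1 hy)

lemma leaf_not_in_chain (ht : T.IsTree) {m : ℕ} {f : ℕ → Fin n} (hf : NChain T m f)
    (hm1 : 1 ≤ m) (hlt : m < n - 1) {x u : Fin n} (hu : T.neighborSet x = {u})
    (hxr : x ≠ f 0) : ∀ i ≤ m, x ≠ f i := by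
  intro i hi heq
  rcases Nat.eq_zero_or_pos i with rfl | hipos
  · exact hxr heq
  rcases eq_or_lt_of_le hi with rfl | hilt
  · have hadj : T.Adj (f (i-1)) (f i) := by
      have := hf.2.1 (i-1) (by omega)
      rwa [show i - 1 + 1 = i by omega] at this
    have hmem : f (i-1) ∈ T.neighborSet x := by rw [heq]; exact hadj.symm
    rw [hu] at hmem
    have he : u = f (i-1) := (Set.mem_singleton_iff.mp hmem).symm
    have hend : T.neighborSet (f i) = {f (i-1)} := by rw [← heq, hu, he]
    have := nchain_closure hf hm1 hend ht.isConnected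
    omega
  · have h2 := hf.2.2.2 i hipos hilt
    rw [← heq, hu] at h2
    have ha : f (i-1) ∈ ({u} : Set (Fin n)) := by rw [h2]; exact Set.mem_insert _ _
    have hb : f (i+1) ∈ ({u} : Set (Fin n)) := by
      rw [h2]; exact Set.mem_insert_of_mem _ rfl
    have hab : f (i-1) = f (i+1) :=
      (Set.mem_singleton_iff.mp ha).trans (Set.mem_singleton_iff.mp hb).symm
    have := hf.1 (show (i-1:ℕ) ∈ Set.Iic m by simp only [Set.mem_Iic]; omega)
      (show (i+1:ℕ) ∈ Set.Iic m by simp only [Set.mem_Iic]; omega) hab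
    omega

lemma stretch_up (ht : T.IsTree) (hτ : tau T < n - 1) :
    ∃ T', isStretch T T' ∧ T'.IsTree ∧ tau T < tau T' := by
  have hn : 0 < n := by
    have := ht.isConnected.nonempty
    exact Fin.pos this.some
  have hn2 : 2 ≤ n := by omega
  obtain ⟨f, hf⟩ := tau_spec (T := T) hn
  have hm1 : 1 ≤ tau T := tau_pos ht hn2
  have hr : T.neighborSet (f 0) = {f 1} := hf.2.2.1 hm1
  obtain ⟨x, hmax⟩ := exists_max_td ht hn (f 0)
  obtain ⟨hx1, hxr⟩ := td_max_pos ht hn2 (f 0) hmax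
  obtain ⟨u, hu, hud⟩ := far_leaf ht hmax hxr
  have hnotim : ∀ i ≤ tau T, x ≠ f i := leaf_not_in_chain ht hf hm1 hτ hu hxr
  refine ⟨mv T (f 0) x, ⟨f 0, x, (hnotim 0 (by omega)).symm.symm |>.symm, ?_, ?_, ?_⟩, ?_, ?_⟩
  · exact leaf_iff.mpr ⟨f 1, hr⟩
  · exact leaf_iff.mpr ⟨u, hu⟩
  · exact mv_adj (Ne.symm hxr)
  · exact mv_isTree ht hu (Ne.symm hxr)
  · have := le_tau (nchain_extend hf hm1 hu hnotim)
    omega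

end StretchExpand


namespace StretchExpand

variable {n : ℕ} {T : SimpleGraph (Fin n)}

lemma stretch_down (ht : T.IsTree) (hτ : tau T < n - 1) :
    ∃ T', (isStretch T' T ∨ isExpand T' T) ∧ T'.IsTree ∧ tau T < tau T' := by
  have hn : 0 < n := Fin.pos ht.isConnected.nonempty.some
  have hn2 : 2 ≤ n := by omega
  obtain ⟨f, hf⟩ := tau_spec (T := T) hn
  have hm1 : 1 ≤ tau T := tau_pos ht hn2
  have hr : T.neighborSet (f 0) = {f 1} := hf.2.2.1 hm1
  obtain ⟨x, hmax⟩ := exists_max_td ht hn (f 0)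
  obtain ⟨hx1, hxr⟩ := td_max_pos ht hn2 (f 0) hmax
  obtain ⟨u, hu, hud⟩ := far_leaf ht hmax hxr
  set r := f 0 with hrdef
  set D := td ht r x with hD
  -- D ≥ 2
  have hD2 : 2 ≤ D := by
    by_contra hD1
    have hDone : D = 1 := by omega
    have hall : ∀ v : Fin n, v = r ∨ v = f 1 := by
      intro v
      have hv := hmax v
      rw [hDone] at hv
      interval_cases h : td ht r v
      · exact Or.inl (eq_of_td_eq_zero ht h).symm
      · have hadj := adj_of_td_eq_one ht h
        have : v ∈ T.neighborSet r := hadj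
        rw [hr] at this
        exact Or.inr this
    have hsub : (Finset.univ : Finset (Fin n)) ⊆ {r, f 1} := by
      intro v _
      rcases hall v with rfl | rfl
      · exact Finset.mem_insert_self _ _
      · exact Finset.mem_insert_of_mem (Finset.mem_singleton_self _)
    have hcard := Finset.card_le_card hsub
    have : n ≤ 2 := by
      calc n = (Finset.univ : Finset (Fin n)).card := by simp
        _ ≤ ({r, f 1} : Finset (Fin n)).card := hcard
        _ ≤ 2 := Finset.card_insert_le _ _ |>.trans (by simp)
    omega
  have hudD : td ht r u + 1 = D := hud
  have hur : u ≠ r := by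
    intro heq
    rw [heq, td_self] at hudD
    omega
  have hux : u ≠ x := by
    intro heq
    rw [heq, ← hD] at hudD
    omega
  obtain ⟨z0, hz0adj, hz0d, hz0uniq⟩ := penult ht hur
  have hxadj : T.Adj x u := by
    have : u ∈ T.neighborSet x := by rw [hu]; rfl
    exact this
  have hz0x : z0 ≠ x := by
    intro heq
    rw [heq, ← hD] at hz0d
    omega
  have hz0u : z0 ≠ u := by
    intro heq
    rw [heq] at hz0d
    omega
  -- classification of neighbors of u other than z0
  have hclass : ∀ z, T.Adj u z → z ≠ z0 → T.neighborSet z = {u} ∧ td ht r z = D := by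
    intro z hz hzne
    rcases td_adj ht (r := r) hz with h1 | h1
    · -- td z = td u + 1 = D
      have hzD : td ht r z = D := by omega
      have hmaxz : ∀ v, td ht r v ≤ td ht r z := fun v => by
        have := hmax v; omega
      have hzr : z ≠ r := by
        intro heq
        rw [heq, td_self] at hzD
        omega
      obtain ⟨y, hy, hyd⟩ := far_leaf ht hmaxz hzr
      have huy : u = y := by
        have : u ∈ T.neighborSet z := hz.symm
        rw [hy] at this
        exact this
      exact ⟨huy ▸ hy, hzD⟩
    · -- td u = td z + 1, so z = z0, contradiction
      exact absurd (hz0uniq z hz.symm (by omega)) hzne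
  -- x is not on the chain
  have hnotim : ∀ i ≤ tau T, x ≠ f i := leaf_not_in_chain ht hf hm1 hτ hu hxr
  have hrx : r ≠ x := Ne.symm hxr
  set T' := mv T r x with hT'
  have htree' : T'.IsTree := mv_isTree ht hu hrx
  have htau' : tau T + 1 ≤ tau T' := le_tau (nchain_extend hf hm1 hu hnotim)
  have hnx' : T'.neighborSet x = {r} := mv_nbr_b hrx
  have hleafx' : IsLeaf T' x := leaf_iff.mpr ⟨r, hnx'⟩
  have hnu' : T'.neighborSet u = T.neighborSet u \ {x} := mv_nbr_other hur hux
  -- the op formula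
  have hform : ∀ p q, T.Adj p q ↔
      ((T'.Adj p q ∧ p ≠ x ∧ q ≠ x) ∨ (p = x ∧ q = u) ∨ (p = u ∧ q = x)) := by
    intro p q
    constructor
    · intro h
      by_cases hp : p = x
      · subst hp
        have : q ∈ T.neighborSet p := h
        rw [hu] at this
        exact Or.inr (Or.inl ⟨rfl, this⟩)
      · by_cases hq : q = x
        · subst hq
          have : p ∈ T.neighborSet q := h.symm
          rw [hu] at this
          exact Or.inr (Or.inr ⟨this, rfl⟩)
        · exact Or.inl ⟨Or.inl ⟨h, hp, hq⟩, hp, hq⟩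
    · rintro (⟨h', hp, hq⟩ | ⟨rfl, rfl⟩ | ⟨rfl, rfl⟩)
      · rcases h' with ⟨h1, _, _⟩ | ⟨h1, _, _⟩ | ⟨_, h1, _⟩
        · exact h1
        · exact absurd h1 hp
        · exact absurd h1 hq
      · exact hxadj
      · exact hxadj.symm
  have hadj'uz0 : T'.Adj u z0 := Or.inl ⟨hz0adj.symm, hux, hz0x⟩
  by_cases hcase : ∃ z1, T.Adj u z1 ∧ z1 ≠ z0 ∧ z1 ≠ x
  · -- Expand
    obtain ⟨z1, hz1a, hz1z0, hz1x⟩ := hcase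
    refine ⟨T', Or.inr ⟨u, x, z0, hadj'uz0, ?_, ?_, ?_, ?_, hleafx', hux.symm, ?_, hform⟩,
      htree', by omega⟩
    · -- z0 not a leaf of T'
      rintro ⟨w, hw, huniq⟩
      by_cases hz0r : z0 = r
      · have hadj1 : T'.Adj z0 u := hadj'uz0.symm
        have hadj2 : T'.Adj z0 x := by
          rw [hz0r]
          exact Or.inr (Or.inr ⟨rfl, rfl, hrx⟩)
        exact hux ((huniq u hadj1).trans (huniq x hadj2).symm)
      · have hz0r' : td ht r z0 ≠ 0 := fun h0 => hz0r (eq_of_td_eq_zero ht h0).symm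
        obtain ⟨w2, hw2adj, hw2d, _⟩ := penult ht (fun h => hz0r h)
        have hw2u : w2 ≠ u := by
          intro heq
          rw [heq] at hw2d
          omega
        have hw2x : w2 ≠ x := by
          intro heq
          rw [heq, ← hD] at hw2d
          omega
        have hadj1 : T'.Adj z0 u := hadj'uz0.symm
        have hadj2 : T'.Adj z0 w2 := Or.inl ⟨hw2adj.symm, hz0x, hw2x⟩
        exact hw2u (((huniq w2 hadj2).trans (huniq u hadj1).symm))
    · -- other neighbors of u in T' are leaves
      intro z hz hzz0
      have hzmem : z ∈ T.neighborSet u \ {x} := by rw [← hnu']; exact hz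
      obtain ⟨hz1, hz2⟩ := hzmem
      simp only [Set.mem_singleton_iff] at hz2
      obtain ⟨hzleaf, hzD⟩ := hclass z hz1 hzz0
      have hzr : z ≠ r := by
        intro heq
        rw [heq, td_self] at hzD
        omega
      have : T'.neighborSet z = {u} := by
        rw [mv_nbr_other hzr hz2, hzleaf,
          Set.diff_singleton_eq_self (by simp only [Set.mem_singleton_iff]; exact Ne.symm hux)]
      exact leaf_iff.mpr ⟨u, this⟩
    · -- degree at least 2
      rw [hnu']
      rw [show (2:ℕ) = 1 + 1 by rfl]
      rw [Nat.add_one_le_iff]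
      rw [Set.one_lt_ncard (Set.toFinite _)]
      exact ⟨z0, ⟨hz0adj.symm, hz0x⟩, z1, ⟨hz1a, hz1x⟩, Ne.symm hz1z0⟩
    · -- degree at most n - 2
      have hsub : T'.neighborSet u ⊆ Set.univ \ {u, x} := by
        intro z hz
        refine ⟨Set.mem_univ _, ?_⟩
        simp only [Set.mem_insert_iff, Set.mem_singleton_iff]
        push_neg
        constructor
        · intro heq
          exact T'.loopless.irrefl u (heq ▸ hz)
        · intro heq
          rw [hnu'] at hz
          exact hz.2 heq
      have h1 : (Set.univ \ {u, x} : Set (Fin n)).ncard = n - 2 := by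
        rw [Set.ncard_diff (Set.subset_univ _), Set.ncard_univ, Set.ncard_pair hux,
          Nat.card_eq_fintype_card, Fintype.card_fin]
      calc (T'.neighborSet u).ncard ≤ (Set.univ \ {u, x} : Set (Fin n)).ncard :=
            Set.ncard_le_ncard hsub (Set.toFinite _)
        _ = n - 2 := h1
        _ ≤ Fintype.card (Fin n) - 2 := by rw [Fintype.card_fin]
    · -- ¬ T'.Adj u x
      intro h
      have : x ∈ T.neighborSet u \ {x} := by rw [← hnu']; exact h
      exact this.2 rfl
  · -- Stretch
    push_neg at hcase
    have hnu'2 : T'.neighborSet u = {z0} := by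
      rw [hnu']
      ext z
      simp only [Set.mem_diff, Set.mem_singleton_iff, SimpleGraph.mem_neighborSet]
      constructor
      · rintro ⟨h1, h2⟩
        by_contra hne
        exact h2 (hcase z h1 hne)
      · rintro rfl
        exact ⟨hz0adj.symm, hz0x⟩
    refine ⟨T', Or.inl ⟨u, x, hux, leaf_iff.mpr ⟨z0, hnu'2⟩, hleafx', hform⟩, htree', by omega⟩

end StretchExpand


/-- If an (isomorphism-invariant) property of trees holds for some tree on `n` vertices
and is preserved by Stretching and Expanding, then it holds for every tree on `n`
vertices. -/
theorem stmt_8 (n : ℕ) (P : SimpleGraph (Fin n) → Prop)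
    (hIso : ∀ T T' : SimpleGraph (Fin n), Nonempty (T ≃g T') → P T → P T')
    (hStretch : ∀ T T' : SimpleGraph (Fin n), T.IsTree → isStretch T T' → P T → P T')
    (hExpand : ∀ T T' : SimpleGraph (Fin n), T.IsTree → isExpand T T' → P T → P T')
    (T0 : SimpleGraph (Fin n)) (hT0 : T0.IsTree) (hP : P T0) :
    ∀ T : SimpleGraph (Fin n), T.IsTree → P T := by
  classical
  intro T hT
  rcases Nat.eq_zero_or_pos n with rfl | hn
  · obtain ⟨v⟩ := hT.isConnected.nonempty
    exact v.elim0
  have up : ∀ (k : ℕ) (S : SimpleGraph (Fin n)), S.IsTree → P S →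
      n - 1 - StretchExpand.tau S ≤ k →
      ∃ Sp : SimpleGraph (Fin n), Sp.IsTree ∧ P Sp ∧ StretchExpand.tau Sp = n - 1 := by
    intro k
    induction k with
    | zero =>
      intro S hS hPS hk
      have h1 := StretchExpand.tau_le (T := S) hn
      exact ⟨S, hS, hPS, by omega⟩
    | succ k ih =>
      intro S hS hPS hk
      by_cases heq : StretchExpand.tau S = n - 1
      · exact ⟨S, hS, hPS, heq⟩
      · have hlt : StretchExpand.tau S < n - 1 :=
          lt_of_le_of_ne (StretchExpand.tau_le hn) heq
        obtain ⟨S', hst, htree', htau'⟩ := StretchExpand.stretch_up hS hlt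
        exact ih S' htree' (hStretch S S' hS hst hPS) (by omega)
  obtain ⟨Tp, hTp, hPTp, hTptau⟩ := up (n-1) T0 hT0 hP (by omega)
  have down : ∀ (k : ℕ) (S : SimpleGraph (Fin n)), S.IsTree →
      n - 1 - StretchExpand.tau S ≤ k → P S := by
    intro k
    induction k with
    | zero =>
      intro S hS hk
      have h1 := StretchExpand.tau_le (T := S) hn
      have heq : StretchExpand.tau S = n - 1 := by omega
      obtain ⟨f1, hf1⟩ := StretchExpand.tau_spec (T := Tp) hn
      obtain ⟨f2, hf2⟩ := StretchExpand.tau_spec (T := S) hn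
      rw [hTptau] at hf1
      rw [heq] at hf2
      exact hIso Tp S (StretchExpand.iso_of_full hf1 hf2 hn) hPTp
    | succ k ih =>
      intro S hS hk
      by_cases heq : StretchExpand.tau S = n - 1
      · exact ih S hS (by omega)
      · have hlt : StretchExpand.tau S < n - 1 :=
          lt_of_le_of_ne (StretchExpand.tau_le hn) heq
        obtain ⟨S', hop, htree', htau'⟩ := StretchExpand.stretch_down hS hlt
        have hPS' : P S' := ih S' htree'
          (by have := StretchExpand.tau_le (T := S') hn; omega)
        rcases hop with h | h
        · exact hStretch S' S htree' h hPS'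
        · exact hExpand S' S htree' h hPS'
  exact down (n-1) T hT (by omega)
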